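/- Let T be a table with suppressed cell set E and suppressed graph H, and let F be a nonconstant linear invariant of T, i.e., there exist c₀ ∈ ℝ and c : E → ℝ with c not identically zero such that c₀ + Σ_{e∈E} c(e)·x(e) takes the same value at every bounded feasible assignment x of T, and EA(F) = {e : c(e) ≠ 0}. Then for every strongly connected component D of H, the set EA(F) ∩ E(D) is either empty or an edge cut of D, i.e., if nonempty, its removal disconnects the undirected graph with vertex set D and edge set E(D) (directions disregarded). -/

import Mathlib

/-- A two-dimensional table: values, lower/upper bounds, and a set of suppressed cells. -/
structure Table (R C : Type*) where
  val : R × C → ℝ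
  lo : R × C → ℝ
  hi : R × C → ℝ
  sup : Set (R × C)
  lo_le : ∀ e, lo e ≤ val e
  le_hi : ∀ e, val e ≤ hi e
  lo_lt_hi : ∀ e, lo e < hi e

variable {R C : Type*}

/-- A bounded feasible assignment of a table. -/
def BFA [Fintype R] [Fintype C] (T : Table R C) (x : R × C → ℝ) : Prop :=
  (∀ e, e ∉ T.sup → x e = T.val e) ∧
  (∀ e ∈ T.sup, T.lo e ≤ x e ∧ x e ≤ T.hi e) ∧
  (∀ i : R, ∑ j, x (i, j) = ∑ j, T.val (i, j)) ∧
  (∀ j : C, ∑ i, x (i, j) = ∑ i, T.val (i, j))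

/-- One traversable step in the mixed graph with edge set `S`: the edge of a cell `e`
may be traversed from its row endpoint to its column endpoint iff `val e < hi e`,
and from its column endpoint to its row endpoint iff `lo e < val e`. -/
def MStep (T : Table R C) (S : Set (R × C)) (v w : R ⊕ C) : Prop :=
  ∃ e ∈ S, (T.val e < T.hi e ∧ v = Sum.inl e.1 ∧ w = Sum.inr e.2) ∨
           (T.lo e < T.val e ∧ v = Sum.inr e.2 ∧ w = Sum.inl e.1)

/-- Reachability along traversable paths in the mixed graph with edge set `S`. -/
def MReach (T : Table R C) (S : Set (R × C)) : (R ⊕ C) → (R ⊕ C) → Prop :=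
  Relation.ReflTransGen (MStep T S)

/-- Mutual reachability in the mixed graph with edge set `S`. -/
def MutReach (T : Table R C) (S : Set (R × C)) (v w : R ⊕ C) : Prop :=
  MReach T S v w ∧ MReach T S w v

/-- `D` is a strongly connected component of the mixed graph with edge set `S`:
an equivalence class of mutual reachability. -/
def IsSCC (T : Table R C) (S : Set (R × C)) (D : Set (R ⊕ C)) : Prop :=
  ∃ v, D = {w | MutReach T S v w}

/-- Direction-blind adjacency via an edge in `S`. -/
def Adj (S : Set (R × C)) (v w : R ⊕ C) : Prop :=
  ∃ e ∈ S, (v = Sum.inl e.1 ∧ w = Sum.inr e.2) ∨ (v = Sum.inr e.2 ∧ w = Sum.inl e.1)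

/-- Direction-blind connectivity via edges in `S`. -/
def Conn (S : Set (R × C)) : (R ⊕ C) → (R ⊕ C) → Prop :=
  Relation.ReflTransGen (Adj S)

/-- `D` is a connected component of the (direction-blind) graph with edge set `S`. -/
def IsCC (S : Set (R × C)) (D : Set (R ⊕ C)) : Prop :=
  ∃ v, D = {w | Conn S v w}

/-- The edges of `S` with both endpoints in the vertex set `D`. -/
def EdgesIn (S : Set (R × C)) (D : Set (R ⊕ C)) : Set (R × C) :=
  {e | e ∈ S ∧ Sum.inl e.1 ∈ D ∧ Sum.inr e.2 ∈ D}

/-- All vertices of `D` are joined by direction-blind paths using edges in `S`. -/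
def ConnectedOn (S : Set (R × C)) (D : Set (R ⊕ C)) : Prop :=
  ∀ v ∈ D, ∀ w ∈ D, Conn S v w

section AuxFlow
open scoped Classical
variable [Fintype R] [Fintype C]

/-- A flow from `v` to `w`. -/
def IsFlow [Fintype R] [Fintype C] (T : Table R C) (v w : R ⊕ C) (y : R × C → ℝ) : Prop :=
  (∀ e, y e ≠ 0 → e ∈ T.sup) ∧
  (∀ e, 0 < y e → T.val e < T.hi e) ∧
  (∀ e, y e < 0 → T.lo e < T.val e) ∧
  (∀ i : R, ∑ j, y (i, j) = (if v = Sum.inl i then 1 else 0) - (if w = Sum.inl i then 1 else 0)) ∧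
  (∀ j : C, ∑ i, y (i, j) = (if w = Sum.inr j then 1 else 0) - (if v = Sum.inr j then 1 else 0))

variable [Fintype R] [Fintype C]

lemma isFlow_refl (T : Table R C) (v : R ⊕ C) : IsFlow T v v 0 := by
  refine ⟨fun e h => absurd rfl h, fun e h => absurd h (by simp), fun e h => absurd h (by simp),
    fun i => by simp, fun j => by simp⟩

lemma isFlow_trans {T : Table R C} {v w u : R ⊕ C} {y₁ y₂ : R × C → ℝ}
    (h₁ : IsFlow T v w y₁) (h₂ : IsFlow T w u y₂) : IsFlow T v u (y₁ + y₂) := by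
  obtain ⟨s₁, p₁, n₁, r₁, c₁⟩ := h₁
  obtain ⟨s₂, p₂, n₂, r₂, c₂⟩ := h₂
  refine ⟨?_, ?_, ?_, ?_, ?_⟩
  · intro e he
    by_contra hes
    have h1 : y₁ e = 0 := by by_contra h; exact hes (s₁ e h)
    have h2 : y₂ e = 0 := by by_contra h; exact hes (s₂ e h)
    simp [Pi.add_apply, h1, h2] at he
  · intro e he
    rcases lt_or_ge 0 (y₁ e) with h | h
    · exact p₁ e h
    · exact p₂ e (by simpa using by nlinarith [Pi.add_apply y₁ y₂ e] : 0 < y₂ e)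
  · intro e he
    rcases lt_or_ge (y₁ e) 0 with h | h
    · exact n₁ e h
    · exact n₂ e (by nlinarith [Pi.add_apply y₁ y₂ e] : y₂ e < 0)
  · intro i
    have := r₁ i; have := r₂ i
    simp only [Pi.add_apply, Finset.sum_add_distrib]
    rw [r₁ i, r₂ i]; ring
  · intro j
    simp only [Pi.add_apply, Finset.sum_add_distrib]
    rw [c₁ j, c₂ j]; ring

lemma sum_row_indicator (e : R × C) (r : ℝ) (i : R) :
    ∑ j, (if (i, j) = e then r else 0) = if i = e.1 then r else 0 := by
  simp only [Prod.ext_iff]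
  rcases eq_or_ne i e.1 with h | h <;>
    simp [h, Finset.sum_ite_eq, Finset.sum_ite_eq']

lemma sum_col_indicator (e : R × C) (r : ℝ) (j : C) :
    ∑ i, (if (i, j) = e then r else 0) = if j = e.2 then r else 0 := by
  simp only [Prod.ext_iff]
  rcases eq_or_ne j e.2 with h | h <;>
    simp [h, Finset.sum_ite_eq, Finset.sum_ite_eq']

lemma isFlow_fwd {T : Table R C} {e : R × C} (he : e ∈ T.sup) (hlt : T.val e < T.hi e) :
    IsFlow T (Sum.inl e.1) (Sum.inr e.2) (fun e' => if e' = e then 1 else 0) := by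
  refine ⟨?_, ?_, ?_, ?_, ?_⟩
  · intro e' h; rcases eq_or_ne e' e with h' | h'
    · subst h'; exact he
    · simp [h'] at h
  · intro e' h; rcases eq_or_ne e' e with h' | h'
    · subst h'; exact hlt
    · simp [h'] at h
  · intro e' h; rcases eq_or_ne e' e with h' | h' <;> norm_num [h'] at h
  · intro i
    rw [sum_row_indicator]
    rcases eq_or_ne i e.1 with h | h <;> simp [h, eq_comm] <;> norm_num
  · intro j
    rw [sum_col_indicator]
    rcases eq_or_ne j e.2 with h | h <;> simp [h, eq_comm] <;> norm_num

lemma isFlow_bwd {T : Table R C} {e : R × C} (he : e ∈ T.sup) (hlt : T.lo e < T.val e) :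
    IsFlow T (Sum.inr e.2) (Sum.inl e.1) (fun e' => if e' = e then -1 else 0) := by
  refine ⟨?_, ?_, ?_, ?_, ?_⟩
  · intro e' h; rcases eq_or_ne e' e with h' | h'
    · subst h'; exact he
    · simp [h'] at h
  · intro e' h; rcases eq_or_ne e' e with h' | h' <;> norm_num [h'] at h
  · intro e' h; rcases eq_or_ne e' e with h' | h'
    · subst h'; exact hlt
    · simp [h'] at h
  · intro i
    rw [sum_row_indicator]
    rcases eq_or_ne i e.1 with h | h <;> simp [h, eq_comm] <;> norm_num
  · intro j
    rw [sum_col_indicator]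
    rcases eq_or_ne j e.2 with h | h <;> simp [h, eq_comm] <;> norm_num

lemma isFlow_exists {T : Table R C} {v w : R ⊕ C} (h : MReach T T.sup v w) :
    ∃ y, IsFlow T v w y := by
  induction h with
  | refl => exact ⟨0, isFlow_refl T v⟩
  | tail _ hstep ih =>
    obtain ⟨y, hy⟩ := ih
    obtain ⟨e, he, hcase⟩ := hstep
    rcases hcase with ⟨hlt, hv, hw⟩ | ⟨hlt, hv, hw⟩
    · subst hv; subst hw
      exact ⟨_, isFlow_trans hy (isFlow_fwd he hlt)⟩
    · subst hv; subst hw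
      exact ⟨_, isFlow_trans hy (isFlow_bwd he hlt)⟩

lemma sum_mul_indicator (c : R × C → ℝ) (e : R × C) (r : ℝ) :
    ∑ e' : R × C, c e' * (if e' = e then r else 0) = c e * r := by
  rw [Finset.sum_eq_single e] <;> simp +contextual

lemma pert [Nonempty R] [Nonempty C] {T : Table R C} {c₀ ρ : ℝ} {c : R × C → ℝ}
    (hinv : ∀ x, BFA T x → c₀ + ∑ e : R × C, c e * x e = ρ)
    {y : R × C → ℝ}
    (hy1 : ∀ e, y e ≠ 0 → e ∈ T.sup)
    (hy2 : ∀ e, 0 < y e → T.val e < T.hi e)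
    (hy3 : ∀ e, y e < 0 → T.lo e < T.val e)
    (hrow : ∀ i : R, ∑ j, y (i, j) = 0)
    (hcol : ∀ j : C, ∑ i, y (i, j) = 0) :
    ∑ e : R × C, c e * y e = 0 := by
  set f : R × C → ℝ := fun e =>
    if 0 < y e then (T.hi e - T.val e) / y e
    else if y e < 0 then (T.val e - T.lo e) / (-y e) else 1 with hf_def
  have hf : ∀ e, 0 < f e := by
    intro e
    rcases lt_trichotomy (y e) 0 with h | h | h
    · have := hy3 e h
      simp only [hf_def, if_neg (by linarith : ¬ 0 < y e), if_pos h]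
      exact div_pos (by linarith) (by linarith)
    · simp [hf_def, h]
    · have := hy2 e h
      simp only [hf_def, if_pos h]
      exact div_pos (by linarith) h
  obtain ⟨e₀⟩ : Nonempty (R × C) := inferInstance
  set ε : ℝ := Finset.univ.inf' Finset.univ_nonempty f with hε_def
  have hε : 0 < ε := by
    rw [hε_def, Finset.lt_inf'_iff]
    exact fun e _ => hf e
  have hεle : ∀ e, ε ≤ f e := fun e => Finset.inf'_le f (Finset.mem_univ e)
  have hbfa : BFA T (fun e => T.val e + ε * y e) := by
    refine ⟨?_, ?_, ?_, ?_⟩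
    · intro e he
      have hy : y e = 0 := by
        by_contra h; exact he (hy1 e h)
      simp [hy]
    · intro e _
      rcases lt_trichotomy (y e) 0 with h | h | h
      · have hle := hεle e
        simp only [hf_def, if_neg (by linarith : ¬ 0 < y e), if_pos h] at hle
        have h2 : ε * (-y e) ≤ T.val e - T.lo e :=
          (le_div_iff₀ (by linarith : (0:ℝ) < -y e)).mp hle
        constructor
        · show T.lo e ≤ T.val e + ε * y e
          nlinarith [h2]
        · show T.val e + ε * y e ≤ T.hi e
          nlinarith [T.le_hi e, mul_pos hε (by linarith : (0:ℝ) < -y e)]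
      · simp [h, T.lo_le e, T.le_hi e]
      · have hle := hεle e
        simp only [hf_def, if_pos h] at hle
        have h2 : ε * y e ≤ T.hi e - T.val e := (le_div_iff₀ h).mp hle
        constructor
        · show T.lo e ≤ T.val e + ε * y e
          nlinarith [T.lo_le e, mul_pos hε h]
        · show T.val e + ε * y e ≤ T.hi e
          nlinarith [h2]
    · intro i
      simp only [Finset.sum_add_distrib, ← Finset.mul_sum, hrow i, mul_zero, add_zero]
    · intro j
      simp only [Finset.sum_add_distrib, ← Finset.mul_sum, hcol j, mul_zero, add_zero]
  have h1 := hinv _ hbfa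
  have h2 := hinv T.val ⟨fun _ _ => rfl, fun e _ => ⟨T.lo_le e, T.le_hi e⟩,
    fun _ => rfl, fun _ => rfl⟩
  have h3 : ∑ e : R × C, c e * (T.val e + ε * y e)
      = (∑ e : R × C, c e * T.val e) + ε * ∑ e : R × C, c e * y e := by
    rw [Finset.mul_sum, ← Finset.sum_add_distrib]
    exact Finset.sum_congr rfl fun e _ => by ring
  rw [h3] at h1
  have : ε * ∑ e : R × C, c e * y e = 0 := by linarith
  exact (mul_eq_zero.mp this).resolve_left (ne_of_gt hε)

lemma closed_flow [Nonempty R] [Nonempty C] {T : Table R C} {c₀ ρ : ℝ} {c : R × C → ℝ}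
    (hinv : ∀ x, BFA T x → c₀ + ∑ e : R × C, c e * x e = ρ)
    {v : R ⊕ C} {y : R × C → ℝ} (hy : IsFlow T v v y) :
    ∑ e : R × C, c e * y e = 0 := by
  obtain ⟨s, p, n, r, co⟩ := hy
  exact pert hinv s p n (fun i => by rw [r i]; ring) (fun j => by rw [co j]; ring)


end AuxFlow

/-- For a nonconstant linear invariant `c₀ + ∑ c e * x e` (with coefficients supported
on the suppressed cells), the intersection of its effective area `{e | c e ≠ 0}` with
the edge set of any strongly connected component `D` of the suppressed graph is either
empty or an edge cut of `D`. -/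
theorem stmt18 [Fintype R] [Fintype C] [Nonempty R] [Nonempty C]
    (T : Table R C) (c₀ : ℝ) (c : R × C → ℝ)
    (hsupp : ∀ e, e ∉ T.sup → c e = 0)
    (hnz : ∃ e ∈ T.sup, c e ≠ 0)
    (hinv : ∃ ρ : ℝ, ∀ x, BFA T x → c₀ + ∑ e : R × C, c e * x e = ρ) :
    ∀ D : Set (R ⊕ C), IsSCC T T.sup D →
      ({e | c e ≠ 0} ∩ EdgesIn T.sup D).Nonempty →
      ¬ ConnectedOn (EdgesIn T.sup D \ {e | c e ≠ 0}) D := by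
  classical
  obtain ⟨ρ, hinv⟩ := hinv
  intro D ⟨v₀, hD⟩ hne hconn
  -- reachability facts
  have hfwd : ∀ v ∈ D, MReach T T.sup v₀ v := fun v hv => (hD ▸ hv).1
  have hbwd : ∀ v ∈ D, MReach T T.sup v v₀ := fun v hv => (hD ▸ hv).2
  -- the potential function
  have h1 : ∀ v ∈ D, ∃ r : ℝ, ∀ y, IsFlow T v₀ v y → ∑ e : R × C, c e * y e = r := by
    intro v hv
    obtain ⟨y', hy'⟩ := isFlow_exists (hbwd v hv)
    refine ⟨-∑ e : R × C, c e * y' e, ?_⟩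
    intro y hy
    have hc := closed_flow (c₀ := c₀) (ρ := ρ) hinv (isFlow_trans hy hy')
    have hsum : ∑ e : R × C, c e * (y + y') e
        = (∑ e : R × C, c e * y e) + ∑ e : R × C, c e * y' e := by
      rw [← Finset.sum_add_distrib]
      exact Finset.sum_congr rfl fun e _ => by simp [Pi.add_apply]; ring
    rw [hsum] at hc
    linarith
  choose! φ hφ using h1
  -- the edge equation
  have hedge : ∀ e ∈ EdgesIn T.sup D, φ (Sum.inr e.2) = φ (Sum.inl e.1) + c e := by
    rintro e ⟨heS, h1D, h2D⟩
    rcases lt_or_ge (T.val e) (T.hi e) with hlt | hge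
    · obtain ⟨y, hy⟩ := isFlow_exists (hfwd _ h1D)
      set g : R × C → ℝ := fun e'' => if e'' = e then 1 else 0 with hg
      have hflow := isFlow_trans hy (isFlow_fwd heS hlt)
      have hv2 := hφ (Sum.inr e.2) h2D _ hflow
      have hv1 := hφ (Sum.inl e.1) h1D _ hy
      have hsum : ∑ e' : R × C, c e' * (y + g) e'
          = (∑ e' : R × C, c e' * y e') + c e * 1 := by
        rw [← sum_mul_indicator c e 1, ← Finset.sum_add_distrib]
        exact Finset.sum_congr rfl fun e' _ => by simp only [Pi.add_apply, hg]; ring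
      rw [hsum, hv1] at hv2
      linarith
    · have hlt' : T.lo e < T.val e := lt_of_lt_of_le (T.lo_lt_hi e) hge
      obtain ⟨y, hy⟩ := isFlow_exists (hfwd _ h2D)
      set g : R × C → ℝ := fun e'' => if e'' = e then -1 else 0 with hg
      have hflow := isFlow_trans hy (isFlow_bwd heS hlt')
      have hv1 := hφ (Sum.inl e.1) h1D _ hflow
      have hv2 := hφ (Sum.inr e.2) h2D _ hy
      have hsum : ∑ e' : R × C, c e' * (y + g) e'
          = (∑ e' : R × C, c e' * y e') + c e * (-1) := by
        rw [← sum_mul_indicator c e (-1), ← Finset.sum_add_distrib]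
        exact Finset.sum_congr rfl fun e' _ => by simp only [Pi.add_apply, hg]; ring
      rw [hsum, hv2] at hv1
      linarith
  -- φ is constant along direction-blind paths avoiding the effective area
  have hconst : ∀ v w : R ⊕ C, Relation.ReflTransGen (Adj (EdgesIn T.sup D \ {e | c e ≠ 0})) v w →
      φ v = φ w := by
    intro v w h
    induction h with
    | refl => rfl
    | tail _ hstep ih =>
      obtain ⟨e, ⟨heD, hez⟩, hcase⟩ := hstep
      have hez' : c e = 0 := by simpa using hez
      have := hedge e heD
      rcases hcase with ⟨hv, hw⟩ | ⟨hv, hw⟩ <;> subst hv <;> subst hw <;> rw [ih] <;> linarith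
  obtain ⟨e₀, he₀c, he₀D⟩ := hne
  have h1D := he₀D.2.1
  have h2D := he₀D.2.2
  have := hconst _ _ (hconn _ h1D _ h2D)
  have := hedge e₀ he₀D
  exact he₀c (by simpa using by linarith : c e₀ = 0)
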